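/- Let L_1, ..., L_m be real random variables with conditional densities f_{L_j|B_j}(·|b), b ∈ {0,1}, B_j uniform. Define the mixed channel density f̃(l|b) = (1/m) Σ_{j=1}^m f_{L_j|B_j}(l|b), and let (B̃, L̃) be distributed accordingly with B̃ uniform. Then m·GMI_{L̃} = m - inf_{s≥0} Σ_{j=1}^m E[log₂(1 + e^{-s(-1)^{B_j+1}L_j})]; i.e., the sum of m copies of the mixed-channel GMI equals the BICM GMI of the original collection (channel mixing preserves the BICM GMI). -/

import Mathlib

open Real MeasureTheory Finset Pointwise

/-- `h(x) = log₂(1 + e^{-x})`. -/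
noncomputable def hfun (x : ℝ) : ℝ := Real.logb 2 (1 + Real.exp (-x))

/-- Theorem 4: channel mixing preserves the BICM GMI; `m` copies of the
mixed-channel GMI equal the BICM GMI of the original collection. -/
theorem channel_mixing_preserves_gmi (m : ℕ) (hm : 0 < m)
    (f : Fin m → Bool → ℝ → ℝ)
    (hf : ∀ j b l, 0 ≤ f j b l) (hint : ∀ j b, ∫ l, f j b l = 1)
    (hintg : ∀ (s : ℝ) (j : Fin m),
      Integrable (fun l => f j false l * hfun (-(s * l))) ∧
      Integrable (fun l => f j true l * hfun (s * l))) :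
    (m : ℝ) * (1 - sInf {x : ℝ | ∃ s, 0 ≤ s ∧ x =
        (1/2) * (∫ l, ((1 / (m : ℝ)) * ∑ j, f j false l) * hfun (-(s * l))) +
          (1/2) * (∫ l, ((1 / (m : ℝ)) * ∑ j, f j true l) * hfun (s * l))})
      = (m : ℝ) - sInf {x : ℝ | ∃ s, 0 ≤ s ∧ x =
        ∑ j, ((1/2) * (∫ l, f j false l * hfun (-(s * l))) +
          (1/2) * (∫ l, f j true l * hfun (s * l)))} := by
  have hm0 : (m : ℝ) ≠ 0 := Nat.cast_ne_zero.mpr hm.ne'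
  have key : ∀ s : ℝ,
      (m : ℝ) * ((1/2) * (∫ l, ((1 / (m : ℝ)) * ∑ j, f j false l) * hfun (-(s * l))) +
        (1/2) * (∫ l, ((1 / (m : ℝ)) * ∑ j, f j true l) * hfun (s * l)))
      = ∑ j, ((1/2) * (∫ l, f j false l * hfun (-(s * l))) +
          (1/2) * (∫ l, f j true l * hfun (s * l))) := by
    intro s
    have h1 : (∫ l, ((1 / (m : ℝ)) * ∑ j, f j false l) * hfun (-(s * l)))
        = (1/(m:ℝ)) * ∑ j, ∫ l, f j false l * hfun (-(s * l)) := by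
      have e : ∀ l, ((1 / (m : ℝ)) * ∑ j, f j false l) * hfun (-(s * l))
          = (1/(m:ℝ)) * ∑ j, f j false l * hfun (-(s * l)) := by
        intro l; rw [mul_assoc, Finset.sum_mul]
      simp_rw [e]
      rw [integral_const_mul, integral_finset_sum]
      exact fun j _ => (hintg s j).1
    have h2 : (∫ l, ((1 / (m : ℝ)) * ∑ j, f j true l) * hfun (s * l))
        = (1/(m:ℝ)) * ∑ j, ∫ l, f j true l * hfun (s * l) := by
      have e : ∀ l, ((1 / (m : ℝ)) * ∑ j, f j true l) * hfun (s * l)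
          = (1/(m:ℝ)) * ∑ j, f j true l * hfun (s * l) := by
        intro l; rw [mul_assoc, Finset.sum_mul]
      simp_rw [e]
      rw [integral_const_mul, integral_finset_sum]
      exact fun j _ => (hintg s j).2
    rw [h1, h2, Finset.sum_add_distrib, ← Finset.mul_sum, ← Finset.mul_sum]
    field_simp
  have hset : {x : ℝ | ∃ s, 0 ≤ s ∧ x =
        ∑ j, ((1/2) * (∫ l, f j false l * hfun (-(s * l))) +
          (1/2) * (∫ l, f j true l * hfun (s * l)))}
      = (m : ℝ) • {x : ℝ | ∃ s, 0 ≤ s ∧ x =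
        (1/2) * (∫ l, ((1 / (m : ℝ)) * ∑ j, f j false l) * hfun (-(s * l))) +
          (1/2) * (∫ l, ((1 / (m : ℝ)) * ∑ j, f j true l) * hfun (s * l))} := by
    ext x
    constructor
    · rintro ⟨s, hs, rfl⟩
      exact ⟨_, ⟨s, hs, rfl⟩, by simpa using key s⟩
    · rintro ⟨y, ⟨s, hs, rfl⟩, rfl⟩
      exact ⟨s, hs, by simpa using key s⟩
  rw [hset, Real.sInf_smul_of_nonneg (by positivity), smul_eq_mul]
  ring
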